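/- Let G=(V,E) be an undirected connected simple locally finite graph and let x,y be neighboring vertices. Then κ(x,y) ≥ −(1 − 1/d_x − 1/d_y − ♯(x,y)/(d_x∧d_y))_+ − (1 − 1/d_x − 1/d_y − ♯(x,y)/(d_x∨d_y))_+ + ♯(x,y)/(d_x∨d_y), where d_x∧d_y = min{d_x,d_y} and d_x∨d_y = max{d_x,d_y}. -/

import Mathlib

open SimpleGraph Finset

variable {V : Type*}

/-- The probability measure attached to a vertex `x`: uniform on its neighbors. -/
noncomputable def nbrMeasure (G : SimpleGraph V) [G.LocallyFinite] [DecidableRel G.Adj]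
    (x z : V) : ℝ :=
  if G.Adj x z then ((G.degree x : ℝ))⁻¹ else 0

/-- A coupling (transfer plan) between the measures `m_x` and `m_y`. -/
def IsCoupling (G : SimpleGraph V) [G.LocallyFinite] [DecidableRel G.Adj]
    (x y : V) (ξ : V → V → ℝ) : Prop :=
  (∀ u v, 0 ≤ ξ u v) ∧
  (∀ u v, ξ u v ≠ 0 → G.Adj x u ∧ G.Adj y v) ∧
  (∀ u, ∑ v ∈ G.neighborFinset y, ξ u v = nbrMeasure G x u) ∧
  (∀ v, ∑ u ∈ G.neighborFinset x, ξ u v = nbrMeasure G y v)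

/-- The transportation distance `W₁(m_x, m_y)`. -/
noncomputable def W1 (G : SimpleGraph V) [G.LocallyFinite] [DecidableRel G.Adj]
    (x y : V) : ℝ :=
  sInf { c : ℝ | ∃ ξ : V → V → ℝ, IsCoupling G x y ξ ∧
    c = ∑ u ∈ G.neighborFinset x, ∑ v ∈ G.neighborFinset y, (G.dist u v : ℝ) * ξ u v }

/-- Ollivier's Ricci curvature `κ(x,y) = 1 - W₁(m_x,m_y)/d(x,y)`. -/
noncomputable def ricci (G : SimpleGraph V) [G.LocallyFinite] [DecidableRel G.Adj]
    (x y : V) : ℝ :=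
  1 - W1 G x y / (G.dist x y : ℝ)

/-- Positive part of a real number: `a₊ = max a 0`. -/
noncomputable def posPart' (a : ℝ) : ℝ := max a 0

/-- `♯(x,y)`: the number of common neighbors of `x` and `y`. -/
def triangles (G : SimpleGraph V) [G.LocallyFinite] [DecidableEq V] (x y : V) : ℕ :=
  (G.neighborFinset x ∩ G.neighborFinset y).card

private lemma div_mul_le_self' {a : ℝ} (c : ℝ) (ha : 0 ≤ a) :
    a / c * c ≤ a := by
  rcases eq_or_ne c 0 with h | h
  · simp [h, ha]
  · rw [div_mul_cancel₀ _ h]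

private lemma sum_ite_two [DecidableEq V] (F B : Finset V) (a : V) (c1 c3 : ℝ)
    (haF : a ∈ F) (hBF : B ⊆ F) (haB : a ∉ B) :
    ∑ v ∈ F, (if v = a then c1 else if v ∈ B then c3 else 0)
      = c1 + B.card * c3 := by
  have hpt : ∀ v ∈ F, (if v = a then c1 else if v ∈ B then c3 else 0)
      = (if v = a then c1 else 0) + (if v ∈ B then c3 else 0) := by
    intro v _
    by_cases h1 : v = a
    · subst h1; simp [haB]
    · simp [h1]
  rw [Finset.sum_congr rfl hpt, Finset.sum_add_distrib,
    Finset.sum_ite_eq' F a fun _ => c1, if_pos haF, Finset.sum_ite_mem,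
    Finset.inter_eq_right.mpr hBF, Finset.sum_const, nsmul_eq_mul]

private lemma sum_ite_three [DecidableEq V] (F B : Finset V) (a b : V) (c1 c2 c3 : ℝ)
    (haF : a ∈ F) (hbF : b ∈ F) (hba : b ≠ a) (hBF : B ⊆ F) (haB : a ∉ B) (hbB : b ∉ B) :
    ∑ v ∈ F, (if v = a then c1 else if v = b then c2 else if v ∈ B then c3 else 0)
      = c1 + c2 + B.card * c3 := by
  have hpt : ∀ v ∈ F, (if v = a then c1 else if v = b then c2 else if v ∈ B then c3 else 0)
      = (if v = a then c1 else 0) + ((if v = b then c2 else 0) + (if v ∈ B then c3 else 0)) := by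
    intro v _
    by_cases h1 : v = a
    · subst h1
      have hne : ¬ (v = b) := fun h => hba h.symm
      simp [haB, hne]
    · by_cases h2 : v = b
      · subst h2; simp [h1, hbB]
      · simp [h1, h2]
  rw [Finset.sum_congr rfl hpt, Finset.sum_add_distrib, Finset.sum_add_distrib,
    Finset.sum_ite_eq' F a fun _ => c1, if_pos haF,
    Finset.sum_ite_eq' F b fun _ => c2, if_pos hbF, Finset.sum_ite_mem,
    Finset.inter_eq_right.mpr hBF, Finset.sum_const, nsmul_eq_mul]
  ring

set_option maxHeartbeats 2000000 in
private lemma W1_le_bound [DecidableEq V] (G : SimpleGraph V) [G.LocallyFinite]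
    [DecidableRel G.Adj]
    (hG : G.Connected) (x y : V) (hxy : G.Adj x y) (hdeg : G.degree x ≤ G.degree y) :
    W1 G x y ≤ 1 + posPart' (1 - 1 / (G.degree x : ℝ) - 1 / (G.degree y : ℝ) -
          (triangles G x y : ℝ) / (G.degree x : ℝ))
      + posPart' (1 - 1 / (G.degree x : ℝ) - 1 / (G.degree y : ℝ) -
          (triangles G x y : ℝ) / (G.degree y : ℝ))
      - (triangles G x y : ℝ) / (G.degree y : ℝ) := by
  classical
  -- basic sets
  set Nx := G.neighborFinset x with hNxdef
  set Ny := G.neighborFinset y with hNydef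
  set C : Finset V := Nx ∩ Ny with hCdef
  set A : Finset V := (Nx \ Ny).erase y with hAdef
  set B : Finset V := (Ny \ Nx).erase x with hBdef
  have hyNx : y ∈ Nx := by rw [hNxdef, SimpleGraph.mem_neighborFinset]; exact hxy
  have hxNy : x ∈ Ny := by rw [hNydef, SimpleGraph.mem_neighborFinset]; exact hxy.symm
  have hxNx : x ∉ Nx := by rw [hNxdef, SimpleGraph.mem_neighborFinset]; exact G.irrefl
  have hyNy : y ∉ Ny := by rw [hNydef, SimpleGraph.mem_neighborFinset]; exact G.irrefl
  have hCNx : C ⊆ Nx := Finset.inter_subset_left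
  have hCNy : C ⊆ Ny := Finset.inter_subset_right
  have hANx : A ⊆ Nx := (Finset.erase_subset _ _).trans Finset.sdiff_subset
  have hANy : ∀ u ∈ A, u ∉ Ny := fun u hu =>
    (Finset.mem_sdiff.mp (Finset.mem_of_mem_erase hu)).2
  have hBNy : B ⊆ Ny := (Finset.erase_subset _ _).trans Finset.sdiff_subset
  have hBNx : ∀ v ∈ B, v ∉ Nx := fun v hv =>
    (Finset.mem_sdiff.mp (Finset.mem_of_mem_erase hv)).2
  have hyA : y ∉ A := Finset.notMem_erase _ _
  have hxB : x ∉ B := Finset.notMem_erase _ _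
  have hyC : y ∉ C := fun h => hyNy (hCNy h)
  have hxC : x ∉ C := fun h => hxNx (hCNx h)
  have hCA : Disjoint C A := Finset.disjoint_left.mpr fun u hu hu' => hANy u hu' (hCNy hu)
  have hCB : Disjoint C B := Finset.disjoint_left.mpr fun u hu hu' => hBNx u hu' (hCNx hu)
  have hNxeq : Nx = insert y (C ∪ A) := by
    ext z
    simp only [hCdef, hAdef, Finset.mem_insert, Finset.mem_union, Finset.mem_inter,
      Finset.mem_erase, Finset.mem_sdiff]
    constructor
    · intro hz
      by_cases hzy : z = y
      · exact Or.inl hzy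
      · by_cases hzN : z ∈ Ny
        · exact Or.inr (Or.inl ⟨hz, hzN⟩)
        · exact Or.inr (Or.inr ⟨hzy, hz, hzN⟩)
    · rintro (rfl | ⟨h, _⟩ | ⟨_, h, _⟩)
      · exact hyNx
      · exact h
      · exact h
  have hNyeq : Ny = insert x (C ∪ B) := by
    ext z
    simp only [hCdef, hBdef, Finset.mem_insert, Finset.mem_union, Finset.mem_inter,
      Finset.mem_erase, Finset.mem_sdiff]
    constructor
    · intro hz
      by_cases hzx : z = x
      · exact Or.inl hzx
      · by_cases hzN : z ∈ Nx
        · exact Or.inr (Or.inl ⟨hzN, hz⟩)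
        · exact Or.inr (Or.inr ⟨hzx, hz, hzN⟩)
    · rintro (rfl | ⟨_, h⟩ | ⟨_, h, _⟩)
      · exact hxNy
      · exact h
      · exact h
  have hyCA : y ∉ C ∪ A := by
    simp only [Finset.mem_union]
    exact fun h => h.elim hyC hyA
  have hxCB : x ∉ C ∪ B := by
    simp only [Finset.mem_union]
    exact fun h => h.elim hxC hxB
  -- cardinalities
  have hcardx : G.degree x = (C.card + A.card) + 1 := by
    have : Nx.card = (C ∪ A).card + 1 := by
      rw [hNxeq, Finset.card_insert_of_notMem hyCA]
    rw [← SimpleGraph.card_neighborFinset_eq_degree, ← hNxdef, this,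
      Finset.card_union_of_disjoint hCA]
  have hcardy : G.degree y = (C.card + B.card) + 1 := by
    have : Ny.card = (C ∪ B).card + 1 := by
      rw [hNyeq, Finset.card_insert_of_notMem hxCB]
    rw [← SimpleGraph.card_neighborFinset_eq_degree, ← hNydef, this,
      Finset.card_union_of_disjoint hCB]
  -- real quantities
  have hdx0 : (0:ℝ) < (G.degree x : ℝ) := by
    have : 0 < G.degree x := (G.degree_pos_iff_exists_adj x).mpr ⟨y, hxy⟩
    exact_mod_cast this
  have hdy0 : (0:ℝ) < (G.degree y : ℝ) := by
    have : 0 < G.degree y := (G.degree_pos_iff_exists_adj y).mpr ⟨x, hxy.symm⟩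
    exact_mod_cast this
  set s : ℝ := ((G.degree x : ℝ))⁻¹ with hsdef
  set t : ℝ := ((G.degree y : ℝ))⁻¹ with htdef
  have hs0 : 0 < s := by positivity
  have ht0 : 0 < t := by positivity
  have hts : t ≤ s := by
    rw [hsdef, htdef]
    exact inv_anti₀ hdx0 (by exact_mod_cast hdeg)
  have hsx : (G.degree x : ℝ) * s = 1 := mul_inv_cancel₀ hdx0.ne'
  have hty : (G.degree y : ℝ) * t = 1 := mul_inv_cancel₀ hdy0.ne'
  set k : ℕ := C.card with hkdef
  set nA : ℕ := A.card with hnAdef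
  set nB : ℕ := B.card with hnBdef
  set α : ℝ := (nA : ℝ) * s with hαdef
  set e : ℝ := (k : ℝ) * (s - t) with hedef
  set f1 : ℝ := min α t with hf1def
  set f2 : ℝ := min e (t - f1) with hf2def
  set f3 : ℝ := t - f1 - f2 with hf3def
  have hα0 : 0 ≤ α := mul_nonneg (Nat.cast_nonneg _) hs0.le
  have he0 : 0 ≤ e := mul_nonneg (Nat.cast_nonneg _) (by linarith)
  have hf10 : 0 ≤ f1 := le_min hα0 ht0.le
  have hf1t : f1 ≤ t := min_le_right _ _
  have hf1α : f1 ≤ α := min_le_left _ _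
  have hf20 : 0 ≤ f2 := le_min he0 (by linarith)
  have hf2e : f2 ≤ e := min_le_left _ _
  have hf2' : f2 ≤ t - f1 := min_le_right _ _
  have hf30 : 0 ≤ f3 := by rw [hf3def]; linarith
  have hf3s : f3 ≤ s := by rw [hf3def]; linarith
  -- cast identities
  have h1' : (nA : ℝ) * s + (k : ℝ) * s + s = 1 := by
    have hc : ((nA : ℝ) + (k : ℝ) + 1) * s = 1 := by
      have : ((G.degree x : ℕ) : ℝ) = (nA : ℝ) + (k : ℝ) + 1 := by
        rw [hcardx]; push_cast; ring
      rw [← this]; exact hsx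
    linear_combination hc
  have h2' : (nB : ℝ) * t + (k : ℝ) * t + t = 1 := by
    have hc : ((nB : ℝ) + (k : ℝ) + 1) * t = 1 := by
      have : ((G.degree y : ℕ) : ℝ) = (nB : ℝ) + (k : ℝ) + 1 := by
        rw [hcardy]; push_cast; ring
      rw [← this]; exact hty
    linear_combination hc
  have hbeta : (α - f1) + (e - f2) + (s - f3) = (nB : ℝ) * t := by
    rw [hf3def, hαdef, hedef]
    linear_combination h1' - h2'
  have hB0 : nB = 0 → α - f1 = 0 ∧ e - f2 = 0 ∧ s - f3 = 0 := by
    intro h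
    rw [h] at hbeta
    push_cast at hbeta
    refine ⟨by linarith, by linarith, by linarith⟩
  have hk0 : k = 0 → f2 = 0 ∧ e = 0 := by
    intro h
    have he' : e = 0 := by rw [hedef, h]; push_cast; ring
    refine ⟨?_, he'⟩
    rw [hf2def, he']
    exact min_eq_left (by linarith)
  have hA0 : nA = 0 → f1 = 0 ∧ α = 0 := by
    intro h
    have hα' : α = 0 := by rw [hαdef, h]; push_cast; ring
    refine ⟨?_, hα'⟩
    rw [hf1def, hα']
    exact min_eq_left ht0.le
  -- the coupling
  set cB : ℝ := (s - f3) / (nB : ℝ) with hcBdef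
  set cCx : ℝ := f2 / (k : ℝ) with hcCxdef
  set cCB : ℝ := (e - f2) / ((k : ℝ) * (nB : ℝ)) with hcCBdef
  set cAx : ℝ := f1 / (nA : ℝ) with hcAxdef
  set cAB : ℝ := (α - f1) / ((nA : ℝ) * (nB : ℝ)) with hcABdef
  have hcB0 : 0 ≤ cB := div_nonneg (by linarith) (Nat.cast_nonneg _)
  have hcCx0 : 0 ≤ cCx := div_nonneg hf20 (Nat.cast_nonneg _)
  have hcCB0 : 0 ≤ cCB := div_nonneg (by linarith) (mul_nonneg (Nat.cast_nonneg _) (Nat.cast_nonneg _))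
  have hcAx0 : 0 ≤ cAx := div_nonneg hf10 (Nat.cast_nonneg _)
  have hcAB0 : 0 ≤ cAB := div_nonneg (by linarith) (mul_nonneg (Nat.cast_nonneg _) (Nat.cast_nonneg _))
  set ξ : V → V → ℝ := fun u v =>
    if u = y then (if v = x then f3 else if v ∈ B then cB else 0)
    else if u ∈ C then (if v = x then cCx else if v = u then t else if v ∈ B then cCB else 0)
    else if u ∈ A then (if v = x then cAx else if v ∈ B then cAB else 0)
    else 0 with hξdef
  -- evaluation lemmas
  have hξy : ∀ v, ξ y v = (if v = x then f3 else if v ∈ B then cB else 0) := by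
    intro v; rw [hξdef]; simp
  have hξC : ∀ u ∈ C, ∀ v,
      ξ u v = (if v = x then cCx else if v = u then t else if v ∈ B then cCB else 0) := by
    intro u hu v
    have huy : ¬(u = y) := fun h => hyC (h ▸ hu)
    rw [hξdef]; simp [huy, hu]
  have hξA : ∀ u ∈ A, ∀ v, ξ u v = (if v = x then cAx else if v ∈ B then cAB else 0) := by
    intro u hu v
    have huy : ¬(u = y) := fun h => hyA (h ▸ hu)
    have huC : u ∉ C := Finset.disjoint_right.mp hCA hu
    rw [hξdef]; simp [huy, huC, hu]
  have hξ0 : ∀ u, u ∉ Nx → ∀ v, ξ u v = 0 := by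
    intro u hu v
    have h1 : ¬(u = y) := fun h => hu (h ▸ hyNx)
    have h2 : u ∉ C := fun h => hu (hCNx h)
    have h3 : u ∉ A := fun h => hu (hANx h)
    rw [hξdef]; simp [h1, h2, h3]
  -- nonnegativity
  have hξnn : ∀ u v, 0 ≤ ξ u v := by
    intro u v
    rw [hξdef]
    dsimp only
    split_ifs <;> first | exact le_refl 0 | linarith
  -- support
  have hsupp : ∀ u v, ξ u v ≠ 0 → G.Adj x u ∧ G.Adj y v := by
    intro u v h
    constructor
    · by_contra hadj
      have hu : u ∉ Nx := by rw [hNxdef, SimpleGraph.mem_neighborFinset]; exact hadj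
      exact h (hξ0 u hu v)
    · by_contra hadj
      have hv : v ∉ Ny := by rw [hNydef, SimpleGraph.mem_neighborFinset]; exact hadj
      apply h
      have h1 : ¬(v = x) := fun hh => hv (hh ▸ hxNy)
      have h2 : v ∉ B := fun hh => hv (hBNy hh)
      by_cases huy : u = y
      · subst huy; rw [hξy v]; simp [h1, h2]
      · by_cases huC : u ∈ C
        · have h3 : ¬(v = u) := fun hh => hv (hCNy (hh ▸ huC))
          rw [hξC u huC v]; simp [h1, h2, h3]
        · by_cases huA : u ∈ A
          · rw [hξA u huA v]; simp [h1, h2]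
          · have hu : u ∉ Nx := by
              rw [hNxeq]
              simp only [Finset.mem_insert, Finset.mem_union]
              push_neg
              exact ⟨huy, huC, huA⟩
            exact hξ0 u hu v
  -- row sums
  have hrow : ∀ u, ∑ v ∈ Ny, ξ u v = nbrMeasure G x u := by
    intro u
    by_cases huy : u = y
    · rw [huy]
      rw [Finset.sum_congr rfl fun v _ => hξy v,
        sum_ite_two Ny B x f3 cB hxNy hBNy hxB]
      have hm : nbrMeasure G x y = s := by simp only [nbrMeasure, if_pos hxy, hsdef]
      rw [hm, ← hnBdef]
      rcases Nat.eq_zero_or_pos nB with h | h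
      · obtain ⟨-, -, h3⟩ := hB0 h
        rw [h]
        push_cast
        linarith
      · have hnB : ((nB : ℝ)) ≠ 0 := Nat.cast_ne_zero.mpr h.ne'
        rw [hcBdef]
        field_simp
        ring
    · by_cases huC : u ∈ C
      · have hux : u ≠ x := fun hh => hxNx (hh ▸ hCNx huC)
        have huB : u ∉ B := Finset.disjoint_left.mp hCB huC
        rw [Finset.sum_congr rfl fun v _ => hξC u huC v,
          sum_ite_three Ny B x u cCx t cCB hxNy (hCNy huC) hux hBNy hxB huB]
        have hadj : G.Adj x u := by
          rw [← SimpleGraph.mem_neighborFinset, ← hNxdef]; exact hCNx huC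
        have hm : nbrMeasure G x u = s := by simp only [nbrMeasure, if_pos hadj, hsdef]
        rw [hm, ← hnBdef]
        have hk : k ≠ 0 := by
          intro hh
          rw [hkdef, Finset.card_eq_zero] at hh
          rw [hh] at huC
          exact absurd huC (Finset.notMem_empty u)
        have hkR : ((k : ℝ)) ≠ 0 := Nat.cast_ne_zero.mpr hk
        rcases Nat.eq_zero_or_pos nB with h | h
        · obtain ⟨-, h2, -⟩ := hB0 h
          rw [h, hcCxdef]
          push_cast
          have hf2e' : f2 = e := by linarith
          rw [hf2e', hedef]
          field_simp
          try ring
        · have hnB : ((nB : ℝ)) ≠ 0 := Nat.cast_ne_zero.mpr h.ne'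
          rw [hcCxdef, hcCBdef, hedef]
          field_simp
          try ring
      · by_cases huA : u ∈ A
        · have hux : u ≠ x := fun hh => hxNx (hh ▸ hANx huA)
          have huB : u ∉ B := fun hh => hBNx u hh (hANx huA)
          rw [Finset.sum_congr rfl fun v _ => hξA u huA v,
            sum_ite_two Ny B x cAx cAB hxNy hBNy hxB]
          have hadj : G.Adj x u := by
            rw [← SimpleGraph.mem_neighborFinset, ← hNxdef]; exact hANx huA
          have hm : nbrMeasure G x u = s := by simp only [nbrMeasure, if_pos hadj, hsdef]
          rw [hm, ← hnBdef]
          have hnA : nA ≠ 0 := by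
            intro hh
            rw [hnAdef, Finset.card_eq_zero] at hh
            rw [hh] at huA
            exact absurd huA (Finset.notMem_empty u)
          have hnAR : ((nA : ℝ)) ≠ 0 := Nat.cast_ne_zero.mpr hnA
          rcases Nat.eq_zero_or_pos nB with h | h
          · obtain ⟨h1, -, -⟩ := hB0 h
            rw [h, hcAxdef]
            push_cast
            have hf1α' : f1 = α := by linarith
            rw [hf1α', hαdef]
            field_simp
            ring
          · have hnB : ((nB : ℝ)) ≠ 0 := Nat.cast_ne_zero.mpr h.ne'
            rw [hcAxdef, hcABdef, hαdef]
            field_simp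
            try ring
        · have hu : u ∉ Nx := by
            rw [hNxeq]
            simp only [Finset.mem_insert, Finset.mem_union]
            push_neg
            exact ⟨huy, huC, huA⟩
          have hadj : ¬ G.Adj x u := fun hh => hu (by
            rw [hNxdef, SimpleGraph.mem_neighborFinset]; exact hh)
          rw [Finset.sum_congr rfl fun v _ => hξ0 u hu v, Finset.sum_const_zero]
          simp only [nbrMeasure, if_neg hadj]
  -- column sums
  have hcol : ∀ v, ∑ u ∈ Nx, ξ u v = nbrMeasure G y v := by
    intro v
    rw [hNxeq, Finset.sum_insert hyCA, Finset.sum_union hCA]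
    by_cases hvx : v = x
    · rw [hvx]
      have hCsum : ∑ u ∈ C, ξ u x = (k : ℝ) * cCx := by
        rw [Finset.sum_congr rfl fun u hu => by rw [hξC u hu x, if_pos rfl],
          Finset.sum_const, ← hkdef, nsmul_eq_mul]
      have hAsum : ∑ u ∈ A, ξ u x = (nA : ℝ) * cAx := by
        rw [Finset.sum_congr rfl fun u hu => by rw [hξA u hu x, if_pos rfl],
          Finset.sum_const, ← hnAdef, nsmul_eq_mul]
      rw [hξy x, if_pos rfl, hCsum, hAsum]
      have hm : nbrMeasure G y x = t := by simp only [nbrMeasure, if_pos hxy.symm, htdef]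
      rw [hm]
      have hkc : (k : ℝ) * cCx = f2 := by
        rcases Nat.eq_zero_or_pos k with h | h
        · obtain ⟨h1, -⟩ := hk0 h
          rw [h, h1]; push_cast; ring
        · have hkR : ((k : ℝ)) ≠ 0 := Nat.cast_ne_zero.mpr h.ne'
          rw [hcCxdef]; field_simp
      have hac : (nA : ℝ) * cAx = f1 := by
        rcases Nat.eq_zero_or_pos nA with h | h
        · obtain ⟨h1, -⟩ := hA0 h
          rw [h, h1]; push_cast; ring
        · have hnAR : ((nA : ℝ)) ≠ 0 := Nat.cast_ne_zero.mpr h.ne'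
          rw [hcAxdef]; field_simp
      rw [hkc, hac, hf3def]; ring
    · by_cases hvB : v ∈ B
      · have hvnx : v ∉ Nx := hBNx v hvB
        have hCsum : ∑ u ∈ C, ξ u v = (k : ℝ) * cCB := by
          rw [Finset.sum_congr rfl fun u hu => by
              rw [hξC u hu v, if_neg hvx,
                if_neg (show ¬(v = u) from fun hh => hvnx (by rw [hh]; exact hCNx hu)),
                if_pos hvB],
            Finset.sum_const, ← hkdef, nsmul_eq_mul]
        have hAsum : ∑ u ∈ A, ξ u v = (nA : ℝ) * cAB := by
          rw [Finset.sum_congr rfl fun u hu => by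
              rw [hξA u hu v, if_neg hvx, if_pos hvB],
            Finset.sum_const, ← hnAdef, nsmul_eq_mul]
        rw [hξy v, if_neg hvx, if_pos hvB, hCsum, hAsum]
        have hadj : G.Adj y v := by
          rw [← SimpleGraph.mem_neighborFinset, ← hNydef]; exact hBNy hvB
        have hm : nbrMeasure G y v = t := by simp only [nbrMeasure, if_pos hadj, htdef]
        rw [hm]
        have hnB : nB ≠ 0 := by
          intro hh
          rw [hnBdef, Finset.card_eq_zero] at hh
          rw [hh] at hvB
          exact absurd hvB (Finset.notMem_empty v)
        have hnBR : ((nB : ℝ)) ≠ 0 := Nat.cast_ne_zero.mpr hnB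
        have hkc : (k : ℝ) * cCB = (e - f2) / (nB : ℝ) := by
          rcases Nat.eq_zero_or_pos k with h | h
          · obtain ⟨h1, h2⟩ := hk0 h
            rw [h, h1, h2]; push_cast; simp
          · have hkR : ((k : ℝ)) ≠ 0 := Nat.cast_ne_zero.mpr h.ne'
            rw [hcCBdef]; field_simp
        have hac : (nA : ℝ) * cAB = (α - f1) / (nB : ℝ) := by
          rcases Nat.eq_zero_or_pos nA with h | h
          · obtain ⟨h1, h2⟩ := hA0 h
            rw [h, h1, h2]; push_cast; simp
          · have hnAR : ((nA : ℝ)) ≠ 0 := Nat.cast_ne_zero.mpr h.ne'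
            rw [hcABdef]; field_simp
        rw [hkc, hac, hcBdef, ← add_div, ← add_div]
        rw [show s - f3 + (e - f2 + (α - f1)) = (nB : ℝ) * t by linarith [hbeta]]
        field_simp
      · by_cases hvC : v ∈ C
        · have hCsum : ∑ u ∈ C, ξ u v = t := by
            rw [Finset.sum_congr rfl fun u hu => show ξ u v = if v = u then t else 0 by
              rw [hξC u hu v, if_neg hvx]
              by_cases h : v = u
              · rw [if_pos h, if_pos h]
              · rw [if_neg h, if_neg h, if_neg hvB]]
            rw [Finset.sum_ite_eq C v fun _ => t, if_pos hvC]
          have hAsum : ∑ u ∈ A, ξ u v = 0 := by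
            rw [Finset.sum_congr rfl fun u hu => by
                rw [hξA u hu v, if_neg hvx, if_neg hvB],
              Finset.sum_const_zero]
          rw [hξy v, if_neg hvx, if_neg hvB, hCsum, hAsum]
          have hadj : G.Adj y v := by
            rw [← SimpleGraph.mem_neighborFinset, ← hNydef]; exact hCNy hvC
          have hm : nbrMeasure G y v = t := by simp only [nbrMeasure, if_pos hadj, htdef]
          rw [hm]; ring
        · have hv : v ∉ Ny := by
            rw [hNyeq]
            simp only [Finset.mem_insert, Finset.mem_union]
            push_neg
            exact ⟨hvx, hvC, hvB⟩
          have hCsum : ∑ u ∈ C, ξ u v = 0 := by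
            rw [Finset.sum_congr rfl fun u hu => by
                rw [hξC u hu v, if_neg hvx,
                  if_neg (show ¬(v = u) from fun hh => hv (by rw [hh]; exact hCNy hu)),
                  if_neg hvB],
              Finset.sum_const_zero]
          have hAsum : ∑ u ∈ A, ξ u v = 0 := by
            rw [Finset.sum_congr rfl fun u hu => by
                rw [hξA u hu v, if_neg hvx, if_neg hvB],
              Finset.sum_const_zero]
          rw [hξy v, if_neg hvx, if_neg hvB, hCsum, hAsum]
          have hadj : ¬ G.Adj y v := fun hh => hv (by
            rw [hNydef, SimpleGraph.mem_neighborFinset]; exact hh)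
          simp only [nbrMeasure, if_neg hadj]
          ring
  -- the cost-bounding function
  set g : V → V → ℝ := fun u v =>
    if u = y then (if v = x then f3 else if v ∈ B then cB else 0)
    else if u ∈ C then
      (if v = x then cCx else if v = u then 0 else if v ∈ B then 2 * cCB else 0)
    else if u ∈ A then (if v = x then cAx else if v ∈ B then 3 * cAB else 0)
    else 0 with hgdef
  have hgy : ∀ w, g y w = (if w = x then f3 else if w ∈ B then cB else 0) := by
    intro w; rw [hgdef]; simp
  have hgC : ∀ u ∈ C, ∀ w, g u w =
      (if w = x then cCx else if w = u then 0 else if w ∈ B then 2 * cCB else 0) := by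
    intro u hu w
    have huy : ¬(u = y) := fun h => hyC (h ▸ hu)
    rw [hgdef]; simp [huy, hu]
  have hgA : ∀ u ∈ A, ∀ w, g u w = (if w = x then cAx else if w ∈ B then 3 * cAB else 0) := by
    intro u hu w
    have huy : ¬(u = y) := fun h => hyA (h ▸ hu)
    have huC : u ∉ C := Finset.disjoint_right.mp hCA hu
    rw [hgdef]; simp [huy, huC, hu]
  -- distance facts
  have hdadj : ∀ {a b : V}, G.Adj a b → (G.dist a b : ℝ) = 1 := by
    intro a b h
    exact_mod_cast (SimpleGraph.dist_eq_one_iff_adj).mpr h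
  have hd2 : ∀ {a b c : V}, G.Adj a b → G.Adj b c → (G.dist a c : ℝ) ≤ 2 := by
    intro a b c h1 h2
    have := SimpleGraph.dist_le (SimpleGraph.Walk.cons h1 (SimpleGraph.Walk.cons h2
      SimpleGraph.Walk.nil))
    simp only [SimpleGraph.Walk.length_cons, SimpleGraph.Walk.length_nil] at this
    exact_mod_cast this
  have hd3 : ∀ {a b c d : V}, G.Adj a b → G.Adj b c → G.Adj c d → (G.dist a d : ℝ) ≤ 3 := by
    intro a b c d h1 h2 h3
    have := SimpleGraph.dist_le (SimpleGraph.Walk.cons h1 (SimpleGraph.Walk.cons h2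
      (SimpleGraph.Walk.cons h3 SimpleGraph.Walk.nil)))
    simp only [SimpleGraph.Walk.length_cons, SimpleGraph.Walk.length_nil] at this
    exact_mod_cast this
  -- pointwise cost bound
  have hpt : ∀ u ∈ Nx, ∀ v ∈ Ny, (G.dist u v : ℝ) * ξ u v ≤ g u v := by
    intro u hu v hv
    have hadjxu : G.Adj x u := by rwa [hNxdef, SimpleGraph.mem_neighborFinset] at hu
    have hadjyv : G.Adj y v := by rwa [hNydef, SimpleGraph.mem_neighborFinset] at hv
    by_cases huy : u = y
    · rw [huy, hξy v, hgy v]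
      by_cases hvx : v = x
      · rw [if_pos hvx, hvx, hdadj hxy.symm, one_mul]
      · rw [if_neg hvx]
        by_cases hvB : v ∈ B
        · rw [if_pos hvB, hdadj hadjyv, one_mul]
        · rw [if_neg hvB, mul_zero]
    · by_cases huC : u ∈ C
      · rw [hξC u huC v, hgC u huC v]
        by_cases hvx : v = x
        · rw [if_pos hvx, if_pos hvx, hvx, hdadj hadjxu.symm, one_mul]
        · rw [if_neg hvx, if_neg hvx]
          by_cases hvu : v = u
          · rw [if_pos hvu, if_pos hvu, hvu, SimpleGraph.dist_self]
            simp
          · rw [if_neg hvu, if_neg hvu]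
            by_cases hvB : v ∈ B
            · rw [if_pos hvB, if_pos hvB]
              have huy' : G.Adj u y := by
                have : u ∈ Ny := hCNy huC
                rw [hNydef, SimpleGraph.mem_neighborFinset] at this
                exact this.symm
              exact mul_le_mul_of_nonneg_right (hd2 huy' hadjyv) hcCB0
            · rw [if_neg hvB, if_neg hvB, mul_zero]
      · by_cases huA : u ∈ A
        · rw [hξA u huA v, hgA u huA v]
          by_cases hvx : v = x
          · rw [if_pos hvx, if_pos hvx, hvx, hdadj hadjxu.symm, one_mul]
          · rw [if_neg hvx, if_neg hvx]
            by_cases hvB : v ∈ B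
            · rw [if_pos hvB, if_pos hvB]
              exact mul_le_mul_of_nonneg_right (hd3 hadjxu.symm hxy hadjyv) hcAB0
            · rw [if_neg hvB, if_neg hvB, mul_zero]
        · exfalso
          rw [hNxeq] at hu
          simp only [Finset.mem_insert, Finset.mem_union] at hu
          rcases hu with h | h | h
          · exact huy h
          · exact huC h
          · exact huA h
  -- sum of g
  have hgsum : ∑ u ∈ Nx, ∑ v ∈ Ny, g u v
      = (f3 + (nB : ℝ) * cB) + (k : ℝ) * (cCx + 0 + (nB : ℝ) * (2 * cCB))
        + (nA : ℝ) * (cAx + (nB : ℝ) * (3 * cAB)) := by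
    rw [hNxeq, Finset.sum_insert hyCA, Finset.sum_union hCA]
    have hy' : ∑ v ∈ Ny, g y v = f3 + (nB : ℝ) * cB := by
      rw [Finset.sum_congr rfl fun v _ => hgy v,
        sum_ite_two Ny B x f3 cB hxNy hBNy hxB, hnBdef]
    have hC' : ∑ u ∈ C, ∑ v ∈ Ny, g u v = (k : ℝ) * (cCx + 0 + (nB : ℝ) * (2 * cCB)) := by
      rw [Finset.sum_congr rfl fun u hu => by
        rw [Finset.sum_congr rfl fun v _ => hgC u hu v,
          sum_ite_three Ny B x u cCx 0 (2 * cCB) hxNy (hCNy hu)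
            (fun hh => hxNx (hh ▸ hCNx hu)) hBNy hxB (Finset.disjoint_left.mp hCB hu),
          ← hnBdef]]
      rw [Finset.sum_const, ← hkdef, nsmul_eq_mul]
    have hA' : ∑ u ∈ A, ∑ v ∈ Ny, g u v = (nA : ℝ) * (cAx + (nB : ℝ) * (3 * cAB)) := by
      rw [Finset.sum_congr rfl fun u hu => by
        rw [Finset.sum_congr rfl fun v _ => hgA u hu v,
          sum_ite_two Ny B x cAx (3 * cAB) hxNy hBNy hxB, ← hnBdef]]
      rw [Finset.sum_const, ← hnAdef, nsmul_eq_mul]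
    rw [hy', hC', hA']
    ring
  have hgbound : ∑ u ∈ Nx, ∑ v ∈ Ny, g u v
      ≤ s + (f2 + 2 * (e - f2)) + (f1 + 3 * (α - f1)) := by
    have e1 : (nB : ℝ) * cB ≤ s - f3 := by
      rw [hcBdef, mul_comm]; exact div_mul_le_self' _ (by linarith)
    have e2 : (k : ℝ) * cCx ≤ f2 := by
      rw [hcCxdef, mul_comm]; exact div_mul_le_self' _ hf20
    have e3 : (k : ℝ) * ((nB : ℝ) * (2 * cCB)) ≤ 2 * (e - f2) := by
      have hh := div_mul_le_self' ((k : ℝ) * (nB : ℝ)) (show (0:ℝ) ≤ e - f2 by linarith)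
      calc (k : ℝ) * ((nB : ℝ) * (2 * cCB))
          = (e - f2) / ((k : ℝ) * (nB : ℝ)) * ((k : ℝ) * (nB : ℝ)) * 2 := by
            rw [hcCBdef]; ring
        _ ≤ (e - f2) * 2 := mul_le_mul_of_nonneg_right hh (by norm_num)
        _ = 2 * (e - f2) := by ring
    have e4 : (nA : ℝ) * cAx ≤ f1 := by
      rw [hcAxdef, mul_comm]; exact div_mul_le_self' _ hf10
    have e5 : (nA : ℝ) * ((nB : ℝ) * (3 * cAB)) ≤ 3 * (α - f1) := by
      have hh := div_mul_le_self' ((nA : ℝ) * (nB : ℝ)) (show (0:ℝ) ≤ α - f1 by linarith)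
      calc (nA : ℝ) * ((nB : ℝ) * (3 * cAB))
          = (α - f1) / ((nA : ℝ) * (nB : ℝ)) * ((nA : ℝ) * (nB : ℝ)) * 3 := by
            rw [hcABdef]; ring
        _ ≤ (α - f1) * 3 := mul_le_mul_of_nonneg_right hh (by norm_num)
        _ = 3 * (α - f1) := by ring
    rw [hgsum]
    have hdist : (k : ℝ) * (cCx + 0 + (nB : ℝ) * (2 * cCB))
        = (k : ℝ) * cCx + (k : ℝ) * ((nB : ℝ) * (2 * cCB)) := by ring
    have hdist2 : (nA : ℝ) * (cAx + (nB : ℝ) * (3 * cAB))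
        = (nA : ℝ) * cAx + (nA : ℝ) * ((nB : ℝ) * (3 * cAB)) := by ring
    rw [hdist, hdist2]
    linarith
  -- final arithmetic
  have hfinal : s + (f2 + 2 * (e - f2)) + (f1 + 3 * (α - f1))
      ≤ 1 + posPart' (α - t) + posPart' (α + e - t) - (k : ℝ) * t := by
    unfold posPart'
    have he' : e = (k : ℝ) * s - (k : ℝ) * t := by rw [hedef]; ring
    have hα' : α = (nA : ℝ) * s := hαdef
    rcases le_total α t with h | h
    · have hf1e : f1 = α := min_eq_left h
      rcases le_total e (t - α) with h' | h'
      · have hf2e' : f2 = e := by rw [hf2def, hf1e]; exact min_eq_left h'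
        have hm1 : (0:ℝ) ≤ max (α - t) 0 := le_max_right _ _
        have hm2 : (0:ℝ) ≤ max (α + e - t) 0 := le_max_right _ _
        rw [hf1e, hf2e']
        linarith
      · have hf2e' : f2 = t - α := by rw [hf2def, hf1e]; exact min_eq_right h'
        have hm1 : (0:ℝ) ≤ max (α - t) 0 := le_max_right _ _
        have hm2 : max (α + e - t) 0 = α + e - t := max_eq_left (by linarith)
        rw [hf1e, hf2e', hm2]
        linarith
    · have hf1e : f1 = t := min_eq_right h
      have hzero : t - f1 = 0 := by rw [hf1e]; ring
      have hf2e' : f2 = 0 := by rw [hf2def, hzero]; exact min_eq_right he0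
      have hm1 : max (α - t) 0 = α - t := max_eq_left (by linarith)
      have hm2 : max (α + e - t) 0 = α + e - t := max_eq_left (by linarith)
      rw [hf1e, hf2e', hm1, hm2]
      linarith
  -- conclude
  have hmem : (∑ u ∈ Nx, ∑ v ∈ Ny, (G.dist u v : ℝ) * ξ u v) ∈
      { c : ℝ | ∃ ζ : V → V → ℝ, IsCoupling G x y ζ ∧
        c = ∑ u ∈ G.neighborFinset x, ∑ v ∈ G.neighborFinset y, (G.dist u v : ℝ) * ζ u v } :=
    ⟨ξ, ⟨hξnn, hsupp, hrow, hcol⟩, rfl⟩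
  have hbdd : BddBelow { c : ℝ | ∃ ζ : V → V → ℝ, IsCoupling G x y ζ ∧
      c = ∑ u ∈ G.neighborFinset x, ∑ v ∈ G.neighborFinset y, (G.dist u v : ℝ) * ζ u v } := by
    refine ⟨0, fun c hc => ?_⟩
    obtain ⟨ζ, hζ, rfl⟩ := hc
    exact Finset.sum_nonneg fun u _ => Finset.sum_nonneg fun v _ =>
      mul_nonneg (Nat.cast_nonneg _) (hζ.1 u v)
  have hW1 : W1 G x y ≤ ∑ u ∈ Nx, ∑ v ∈ Ny, (G.dist u v : ℝ) * ξ u v := csInf_le hbdd hmem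
  have hcost : (∑ u ∈ Nx, ∑ v ∈ Ny, (G.dist u v : ℝ) * ξ u v) ≤ ∑ u ∈ Nx, ∑ v ∈ Ny, g u v :=
    Finset.sum_le_sum fun u hu => Finset.sum_le_sum fun v hv => hpt u hu v hv
  have htri : (triangles G x y : ℝ) = (k : ℝ) := by norm_cast
  have hsone : (1:ℝ) / (G.degree x : ℝ) = s := by rw [one_div, hsdef]
  have htone : (1:ℝ) / (G.degree y : ℝ) = t := by rw [one_div, htdef]
  have harg1 : 1 - 1 / (G.degree x : ℝ) - 1 / (G.degree y : ℝ)
      - (triangles G x y : ℝ) / (G.degree x : ℝ) = α - t := by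
    rw [htri, hsone, htone, div_eq_mul_inv, ← hsdef, hαdef]
    linarith
  have harg2 : 1 - 1 / (G.degree x : ℝ) - 1 / (G.degree y : ℝ)
      - (triangles G x y : ℝ) / (G.degree y : ℝ) = α + e - t := by
    rw [htri, hsone, htone, div_eq_mul_inv, ← htdef, hαdef, hedef]
    linarith
  have harg3 : (triangles G x y : ℝ) / (G.degree y : ℝ) = (k : ℝ) * t := by
    rw [htri, div_eq_mul_inv, ← htdef]
  rw [harg1, harg2, harg3]
  calc W1 G x y ≤ ∑ u ∈ Nx, ∑ v ∈ Ny, (G.dist u v : ℝ) * ξ u v := hW1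
    _ ≤ ∑ u ∈ Nx, ∑ v ∈ Ny, g u v := hcost
    _ ≤ s + (f2 + 2 * (e - f2)) + (f1 + 3 * (α - f1)) := hgbound
    _ ≤ 1 + posPart' (α - t) + posPart' (α + e - t) - (k : ℝ) * t := hfinal

private lemma W1_set_subset (G : SimpleGraph V) [G.LocallyFinite] [DecidableRel G.Adj]
    (x y : V) :
    { c : ℝ | ∃ ξ : V → V → ℝ, IsCoupling G x y ξ ∧
      c = ∑ u ∈ G.neighborFinset x, ∑ v ∈ G.neighborFinset y, (G.dist u v : ℝ) * ξ u v } ⊆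
    { c : ℝ | ∃ ξ : V → V → ℝ, IsCoupling G y x ξ ∧
      c = ∑ u ∈ G.neighborFinset y, ∑ v ∈ G.neighborFinset x, (G.dist u v : ℝ) * ξ u v } := by
  rintro c ⟨ξ, ⟨h1, h2, h3, h4⟩, rfl⟩
  refine ⟨fun u v => ξ v u, ⟨fun u v => h1 v u,
    fun u v hne => ⟨(h2 v u hne).2, (h2 v u hne).1⟩, fun u => h4 u, fun v => h3 v⟩, ?_⟩
  rw [Finset.sum_comm]
  exact Finset.sum_congr rfl fun u _ => Finset.sum_congr rfl fun v _ => by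
    rw [SimpleGraph.dist_comm]

private lemma W1_comm (G : SimpleGraph V) [G.LocallyFinite] [DecidableRel G.Adj]
    (x y : V) : W1 G x y = W1 G y x := by
  unfold W1
  congr 1
  exact Set.Subset.antisymm (W1_set_subset G x y) (W1_set_subset G y x)

/-- On a connected locally finite graph, for neighbors `x ∼ y`,
`κ(x,y) ≥ -(1 - 1/d_x - 1/d_y - ♯(x,y)/(d_x∧d_y))₊ - (1 - 1/d_x - 1/d_y - ♯(x,y)/(d_x∨d_y))₊
  + ♯(x,y)/(d_x∨d_y)`. -/
theorem ricci_lower_bound_triangles (G : SimpleGraph V) [G.LocallyFinite]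
    [DecidableRel G.Adj] [DecidableEq V]
    (hG : G.Connected) (x y : V) (hxy : G.Adj x y) :
    ricci G x y ≥
      -posPart' (1 - 1 / (G.degree x : ℝ) - 1 / (G.degree y : ℝ) -
          (triangles G x y : ℝ) / ((min (G.degree x) (G.degree y) : ℕ) : ℝ))
      - posPart' (1 - 1 / (G.degree x : ℝ) - 1 / (G.degree y : ℝ) -
          (triangles G x y : ℝ) / ((max (G.degree x) (G.degree y) : ℕ) : ℝ))
      + (triangles G x y : ℝ) / ((max (G.degree x) (G.degree y) : ℕ) : ℝ) := by
  have hdist : (G.dist x y : ℝ) = 1 := by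
    exact_mod_cast (SimpleGraph.dist_eq_one_iff_adj).mpr hxy
  rw [ge_iff_le]
  unfold ricci
  rw [hdist, div_one]
  rcases le_total (G.degree x) (G.degree y) with h | h
  · have hb := W1_le_bound G hG x y hxy h
    have hmin : min (G.degree x) (G.degree y) = G.degree x := min_eq_left h
    have hmax : max (G.degree x) (G.degree y) = G.degree y := max_eq_right h
    rw [hmin, hmax]
    linarith
  · have hb := W1_le_bound G hG y x hxy.symm h
    have htri : triangles G y x = triangles G x y := by
      rw [triangles, triangles, Finset.inter_comm]
    have hW : W1 G x y = W1 G y x := W1_comm G x y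
    have hmin : min (G.degree x) (G.degree y) = G.degree y := min_eq_right h
    have hmax : max (G.degree x) (G.degree y) = G.degree x := max_eq_left h
    rw [hmin, hmax, hW]
    rw [htri] at hb
    rw [show (1 - 1 / (G.degree y : ℝ) - 1 / (G.degree x : ℝ)
          - (triangles G x y : ℝ) / (G.degree y : ℝ))
        = (1 - 1 / (G.degree x : ℝ) - 1 / (G.degree y : ℝ)
          - (triangles G x y : ℝ) / (G.degree y : ℝ)) from by ring,
      show (1 - 1 / (G.degree y : ℝ) - 1 / (G.degree x : ℝ)
          - (triangles G x y : ℝ) / (G.degree x : ℝ))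
        = (1 - 1 / (G.degree x : ℝ) - 1 / (G.degree y : ℝ)
          - (triangles G x y : ℝ) / (G.degree x : ℝ)) from by ring] at hb
    linarith
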